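/- Let K be a compact metric space, Y a normed space, and let d_1, …, d_q : K → ℝ be continuous nonnegative functions with ∑_i d_i(û) = 1 for all û. Fix vectors ζ¹, …, ζ^q ∈ Y. For û ∈ K define the 1-periodic step function ζ(·, û) : ℝ → Y by ζ(s, û) = ζ^i when d_1(û)+⋯+d_{i−1}(û) ≤ s mod 1 < d_1(û)+⋯+d_i(û). Then for û₁, û₂ ∈ K, ∫₀¹ ‖ζ(s, û₁) − ζ(s, û₂)‖⁴ ds ≤ C ∑_{i=1}^q |d_i(û₁) − d_i(û₂)|, where C depends only on q and max_i ‖ζ^i‖. -/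

import Mathlib

open MeasureTheory Finset


lemma aux_find (P : ℕ → Prop) [DecidablePred P] : ∀ n : ℕ, P 0 → ¬ P n →
    ∃ i < n, P i ∧ ¬ P (i+1) := by
  intro n
  induction n with
  | zero => intro h0 hn; exact absurd h0 hn
  | succ m ih =>
    intro h0 hn
    by_cases hm : P m
    · exact ⟨m, Nat.lt_succ_self m, hm, hn⟩
    · obtain ⟨i, hi, h⟩ := ih h0 hm
      exact ⟨i, hi.trans (Nat.lt_succ_self m), h⟩


/-- Equicontinuity estimate for the 1-periodic relaxation step functions:
if `z uhat` equals `ζ i` on the interval `[D i uhat, D (i+1) uhat)` determined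
by the partial sums `D i uhat = ∑_{j<i} d j uhat` of a continuous partition of
unity `d` on a compact metric space `K`, then the `L⁴` distance on `[0,1]`
between `z uhat₁` and `z uhat₂` is controlled by `∑ i |d i uhat₁ - d i uhat₂|`,
with a constant depending only on `q` and `max_i ‖ζ i‖`. -/
theorem stmt_5 {K Y : Type*} [MetricSpace K] [CompactSpace K]
    [NormedAddCommGroup Y]
    (q : ℕ) (hq : 0 < q) (d : ℕ → K → ℝ)
    (hd_cont : ∀ i < q, Continuous (d i))
    (hd_nonneg : ∀ i < q, ∀ u : K, 0 ≤ d i u)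
    (hd_sum : ∀ u : K, ∑ i ∈ Finset.range q, d i u = 1)
    (ζ : ℕ → Y) (z : K → ℝ → Y)
    (hz : ∀ u : K, ∀ i < q, ∀ s ∈ Set.Ico (∑ j ∈ Finset.range i, d j u)
      (∑ j ∈ Finset.range (i + 1), d j u), z u s = ζ i) :
    ∃ C : ℝ, 0 < C ∧ ∀ u₁ u₂ : K,
      (∫ s in (0:ℝ)..1, ‖z u₁ s - z u₂ s‖ ^ 4) ≤
        C * ∑ i ∈ Finset.range q, |d i u₁ - d i u₂| := by
  classical
  set D : K → ℕ → ℝ := fun u i => ∑ j ∈ Finset.range i, d j u with hD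
  have hD0 : ∀ u, D u 0 = 0 := fun u => by simp [hD]
  have hDq : ∀ u, D u q = 1 := fun u => hd_sum u
  have hne : (Finset.range q).Nonempty := Finset.nonempty_range_iff.mpr hq.ne'
  set M : ℝ := (Finset.range q).sup' hne (fun i => ‖ζ i‖) with hMdef
  have hM0 : 0 ≤ M := le_trans (norm_nonneg (ζ 0))
    (Finset.le_sup' (f := fun i => ‖ζ i‖) (Finset.mem_range.mpr hq))
  have hMi : ∀ i < q, ‖ζ i‖ ≤ M := fun i hi =>
    Finset.le_sup' (f := fun i => ‖ζ i‖) (Finset.mem_range.mpr hi)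
  set B : ℝ := (2*M+1)^4 with hBdef
  have hB0 : 0 < B := by positivity
  refine ⟨B * (q+1), by positivity, fun u₁ u₂ => ?_⟩
  set S : ℝ := ∑ i ∈ Finset.range q, |d i u₁ - d i u₂| with hSdef
  have hS0 : 0 ≤ S := Finset.sum_nonneg fun i _ => abs_nonneg _
  -- each point of [0,1) lies in some step interval
  have hstep : ∀ u : K, ∀ s ∈ Set.Ico (0:ℝ) 1, ∃ i < q, z u s = ζ i ∧
      D u i ≤ s ∧ s < D u (i+1) := by
    intro u s hs
    obtain ⟨i, hi, hPi, hPi1⟩ := aux_find (fun i => D u i ≤ s) q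
      (by show D u 0 ≤ s; rw [hD0]; exact hs.1) (by show ¬ D u q ≤ s; rw [hDq]; exact not_le.mpr hs.2)
    exact ⟨i, hi, hz u i hi s ⟨hPi, not_le.mp hPi1⟩, hPi, not_le.mp hPi1⟩
  set F : ℝ → ℝ := fun s => ∑ i ∈ Finset.range (q+1),
    Set.indicator (Set.Ico (min (D u₁ i) (D u₂ i)) (max (D u₁ i) (D u₂ i)))
      (fun _ => B) s with hFdef
  -- key pointwise bound
  have key : ∀ s ∈ Set.Ico (0:ℝ) 1, ‖z u₁ s - z u₂ s‖ ^ 4 ≤ F s := by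
    intro s hs
    obtain ⟨i₁, hi₁, hz₁, hl₁, hr₁⟩ := hstep u₁ s hs
    obtain ⟨i₂, hi₂, hz₂, _, _⟩ := hstep u₂ s hs
    have hind_nonneg : ∀ i ∈ Finset.range (q+1),
        0 ≤ Set.indicator (Set.Ico (min (D u₁ i) (D u₂ i))
          (max (D u₁ i) (D u₂ i))) (fun _ => B) s := fun i _ =>
      Set.indicator_nonneg (fun _ _ => hB0.le) s
    by_cases hU : ∃ i ∈ Finset.range (q+1),
        s ∈ Set.Ico (min (D u₁ i) (D u₂ i)) (max (D u₁ i) (D u₂ i))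
    · obtain ⟨i, hi, hsi⟩ := hU
      have h1 : B ≤ F s := by
        calc B = Set.indicator (Set.Ico (min (D u₁ i) (D u₂ i))
            (max (D u₁ i) (D u₂ i))) (fun _ => B) s := by
              rw [Set.indicator_of_mem hsi]
          _ ≤ F s := Finset.single_le_sum hind_nonneg hi
      refine le_trans ?_ h1
      rw [hz₁, hz₂]
      calc ‖ζ i₁ - ζ i₂‖ ^ 4 ≤ (2*M+1)^4 := by
            apply pow_le_pow_left₀ (norm_nonneg _)
            calc ‖ζ i₁ - ζ i₂‖ ≤ ‖ζ i₁‖ + ‖ζ i₂‖ := norm_sub_le _ _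
              _ ≤ M + M := add_le_add (hMi i₁ hi₁) (hMi i₂ hi₂)
              _ ≤ 2*M+1 := by linarith
        _ = B := rfl
    · push_neg at hU
      have hiff : ∀ i ∈ Finset.range (q+1), (D u₁ i ≤ s ↔ D u₂ i ≤ s) := by
        intro i hi
        have h := hU i hi
        constructor
        · intro h1
          by_contra h2
          exact (h ⟨le_trans (min_le_left _ _) h1,
            lt_of_lt_of_le (not_le.mp h2) (le_max_right _ _)⟩)
        · intro h1
          by_contra h2
          exact (h ⟨le_trans (min_le_right _ _) h1,
            lt_of_lt_of_le (not_le.mp h2) (le_max_left _ _)⟩)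
      have hl₂ : D u₂ i₁ ≤ s :=
        (hiff i₁ (Finset.mem_range.mpr (hi₁.trans (Nat.lt_succ_self q)))).1 hl₁
      have hr₂ : s < D u₂ (i₁+1) := by
        have := (hiff (i₁+1) (Finset.mem_range.mpr (Nat.succ_lt_succ hi₁)))
        by_contra h2
        exact absurd (this.2 (not_lt.mp h2)) (not_le.mpr hr₁)
      have hz₂' : z u₂ s = ζ i₁ := hz u₂ i₁ hi₁ s ⟨hl₂, hr₂⟩
      rw [hz₁, hz₂', sub_self, norm_zero]
      simpa using Finset.sum_nonneg hind_nonneg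
  -- integrability of F
  have hFint : ∀ i ∈ Finset.range (q+1), Integrable
      (Set.indicator (Set.Ico (min (D u₁ i) (D u₂ i)) (max (D u₁ i) (D u₂ i)))
        (fun _ => B)) volume := by
    intro i _
    rw [integrable_indicator_iff measurableSet_Ico]
    exact integrableOn_const measure_Ico_lt_top.ne
  have hFint' : Integrable F volume := by
    exact integrable_finset_sum _ hFint
  -- value of ∫ F over ℝ
  have hFval : (∫ s, F s) ≤ B * ((q+1) * S) := by
    rw [hFdef]
    rw [integral_finset_sum _ hFint]
    have hterm : ∀ i ∈ Finset.range (q+1),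
        (∫ s, Set.indicator (Set.Ico (min (D u₁ i) (D u₂ i))
          (max (D u₁ i) (D u₂ i))) (fun _ => B) s) ≤ B * S := by
      intro i hi
      rw [integral_indicator_const _ measurableSet_Ico]
      rw [Measure.real, Real.volume_Ico, ENNReal.toReal_ofReal (by
        simp [sub_nonneg, min_le_max])]
      rw [max_sub_min_eq_abs, smul_eq_mul, abs_sub_comm]
      have habs : |D u₁ i - D u₂ i| ≤ S := by
        have hiq : i ≤ q := Nat.lt_succ_iff.mp (Finset.mem_range.mp hi)
        calc |D u₁ i - D u₂ i| = |∑ j ∈ Finset.range i, (d j u₁ - d j u₂)| := by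
              rw [Finset.sum_sub_distrib]
          _ ≤ ∑ j ∈ Finset.range i, |d j u₁ - d j u₂| :=
              Finset.abs_sum_le_sum_abs _ _
          _ ≤ S := Finset.sum_le_sum_of_subset_of_nonneg
              (Finset.range_subset_range.mpr hiq) (fun j _ _ => abs_nonneg _)
      calc |D u₁ i - D u₂ i| * B ≤ S * B := by
            exact mul_le_mul_of_nonneg_right habs hB0.le
        _ = B * S := mul_comm _ _
    calc (∑ i ∈ Finset.range (q+1), ∫ s, Set.indicator (Set.Ico
          (min (D u₁ i) (D u₂ i)) (max (D u₁ i) (D u₂ i))) (fun _ => B) s)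
        ≤ ∑ i ∈ Finset.range (q+1), B * S := Finset.sum_le_sum hterm
      _ = (q+1) * (B * S) := by
          rw [Finset.sum_const, Finset.card_range]; push_cast; ring
      _ = B * ((q+1) * S) := by ring
  by_cases hint : IntervalIntegrable (fun s => ‖z u₁ s - z u₂ s‖ ^ 4) volume 0 1
  · rw [intervalIntegral.integral_of_le (by norm_num : (0:ℝ) ≤ 1)]
    have hg : Integrable (fun s => ‖z u₁ s - z u₂ s‖ ^ 4)
        (volume.restrict (Set.Ioc (0:ℝ) 1)) := by
      have := hint.1
      exact this
    have hF : Integrable F (volume.restrict (Set.Ioc (0:ℝ) 1)) :=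
      hFint'.integrableOn
    have hae : ∀ᵐ s ∂(volume.restrict (Set.Ioc (0:ℝ) 1)),
        ‖z u₁ s - z u₂ s‖ ^ 4 ≤ F s := by
      have h1 : ∀ᵐ s ∂(volume.restrict (Set.Ioc (0:ℝ) 1)), s ≠ (1:ℝ) := by
        refine ae_restrict_of_ae ?_
        rw [ae_iff]
        simp only [not_not]
        have : {a : ℝ | a = 1} = {(1:ℝ)} := by ext x; simp
        rw [this]
        exact Real.volume_singleton
      filter_upwards [ae_restrict_mem measurableSet_Ioc, h1] with s hs hs1
      exact key s ⟨hs.1.le, lt_of_le_of_ne hs.2 hs1⟩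
    calc (∫ s in Set.Ioc (0:ℝ) 1, ‖z u₁ s - z u₂ s‖ ^ 4)
        ≤ ∫ s in Set.Ioc (0:ℝ) 1, F s := integral_mono_ae hg hF hae
      _ ≤ ∫ s, F s := by
          apply integral_mono_measure Measure.restrict_le_self ?_ hFint'
          refine Filter.Eventually.of_forall fun s => ?_
          exact Finset.sum_nonneg fun i _ =>
            Set.indicator_nonneg (fun _ _ => hB0.le) s
      _ ≤ B * ((q+1) * S) := hFval
      _ = B * (q+1) * S := by ring
  · rw [intervalIntegral.integral_undef hint]
    positivity
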